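/- Let I ⊆ ℝ be a nonempty closed bounded interval and let G ⊆ I × ℂ be a bounded set. For x ∈ I and ε > 0 let N_ε(x) = {y ∈ ℂ : there exists x' ∈ I with |x − x'| < ε and (x', y) ∈ G}, and define the oscillation of G at x as Osc(x) = lim_{ε → 0⁺} sup{|y' − y''| : y', y'' ∈ N_ε(x)}. Then the closure of G in ℝ × ℂ is the graph of a continuous function I → ℂ if and only if the projection of G to I is dense in I and Osc(x) = 0 for every x ∈ I. -/

import Mathlib

open Filter Set

theorem stmt_10
    (a b : ℝ) (hab : a ≤ b)
    (G : Set (ℝ × ℂ))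
    (hGsub : ∀ p ∈ G, p.1 ∈ Set.Icc a b)
    (hGbd : Bornology.IsBounded G) :
    (∃ f : ℝ → ℂ, ContinuousOn f (Set.Icc a b) ∧
        closure G = (fun x => (x, f x)) '' Set.Icc a b) ↔
      (Set.Icc a b ⊆ closure (Prod.fst '' G)) ∧
        ∀ x ∈ Set.Icc a b,
          Tendsto
            (fun ε : ℝ =>
              sSup {d : ℝ | ∃ y' y'' : ℂ,
                (∃ x' ∈ Set.Icc a b, |x - x'| < ε ∧ (x', y') ∈ G) ∧
                (∃ x'' ∈ Set.Icc a b, |x - x''| < ε ∧ (x'', y'') ∈ G) ∧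
                d = ‖y' - y''‖})
            (nhdsWithin 0 (Set.Ioi 0)) (nhds 0) := by
  classical
  obtain ⟨C, hC⟩ := isBounded_iff_forall_norm_le.1 hGbd
  -- any element of the distance set is between 0 and 2C
  have hbd : ∀ (x ε : ℝ) (d : ℝ),
      d ∈ {d : ℝ | ∃ y' y'' : ℂ,
        (∃ x' ∈ Set.Icc a b, |x - x'| < ε ∧ (x', y') ∈ G) ∧
        (∃ x'' ∈ Set.Icc a b, |x - x''| < ε ∧ (x'', y'') ∈ G) ∧
        d = ‖y' - y''‖} → 0 ≤ d ∧ d ≤ 2 * C := by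
    rintro x ε d ⟨y', y'', ⟨x', -, -, hy'⟩, ⟨x'', -, -, hy''⟩, rfl⟩
    have h1 : ‖y'‖ ≤ C := le_trans (norm_snd_le ((x', y') : ℝ × ℂ)) (hC _ hy')
    have h2 : ‖y''‖ ≤ C := le_trans (norm_snd_le ((x'', y'') : ℝ × ℂ)) (hC _ hy'')
    constructor
    · exact norm_nonneg _
    · calc ‖y' - y''‖ ≤ ‖y'‖ + ‖y''‖ := by
            simpa using norm_sub_le y' y''
        _ ≤ 2 * C := by linarith
  -- approximation of closure points by points of G
  have happrox : ∀ (x : ℝ) (y : ℂ), (x, y) ∈ closure G → ∀ η > 0,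
      ∃ u v, (u, v) ∈ G ∧ |x - u| < η ∧ ‖y - v‖ < η := by
    intro x y hxy η hη
    obtain ⟨⟨u, v⟩, huv, hd⟩ := Metric.mem_closure_iff.1 hxy η hη
    rw [Prod.dist_eq] at hd
    refine ⟨u, v, huv, ?_, ?_⟩
    · have := lt_of_le_of_lt (le_max_left _ _) hd
      simpa [Real.dist_eq] using this
    · have := lt_of_le_of_lt (le_max_right _ _) hd
      simpa [Complex.dist_eq] using this
  constructor
  · rintro ⟨f, hf, hgraph⟩
    have hval : ∀ x' y', (x', y') ∈ G → y' = f x' := by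
      intro x' y' h
      have : (x', y') ∈ closure G := subset_closure h
      rw [hgraph] at this
      obtain ⟨t, -, ht⟩ := this
      simp only [Prod.mk.injEq] at ht
      rw [← ht.2, ht.1]
    constructor
    · intro x hx
      have hmem : (x, f x) ∈ closure G := by rw [hgraph]; exact ⟨x, hx, rfl⟩
      have h2 := image_closure_subset_closure_image (f := Prod.fst (α := ℝ) (β := ℂ))
        (s := G) continuous_fst
      exact h2 ⟨(x, f x), hmem, rfl⟩
    · intro x hx
      rw [Metric.tendsto_nhds]
      intro δ hδ
      obtain ⟨ε₀, hε₀, hc⟩ := Metric.continuousWithinAt_iff.1 (hf x hx) (δ/3) (by positivity)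
      filter_upwards [Ioo_mem_nhdsGT_of_mem (Set.mem_Ico.2 ⟨le_refl 0, hε₀⟩)] with ε hε
      have key : ∀ d ∈ {d : ℝ | ∃ y' y'' : ℂ,
          (∃ x' ∈ Set.Icc a b, |x - x'| < ε ∧ (x', y') ∈ G) ∧
          (∃ x'' ∈ Set.Icc a b, |x - x''| < ε ∧ (x'', y'') ∈ G) ∧
          d = ‖y' - y''‖}, d ≤ 2 * (δ/3) := by
        rintro d ⟨y', y'', ⟨x', hx'I, hx'ε, hy'⟩, ⟨x'', hx''I, hx''ε, hy''⟩, rfl⟩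
        have e1 : dist (f x') (f x) < δ/3 := by
          apply hc hx'I
          rw [Real.dist_eq, abs_sub_comm]
          exact lt_of_lt_of_le hx'ε (le_of_lt hε.2)
        have e2 : dist (f x'') (f x) < δ/3 := by
          apply hc hx''I
          rw [Real.dist_eq, abs_sub_comm]
          exact lt_of_lt_of_le hx''ε (le_of_lt hε.2)
        rw [hval x' y' hy', hval x'' y'' hy'']
        calc ‖f x' - f x''‖ = dist (f x') (f x'') := (Complex.dist_eq _ _).symm
          _ ≤ dist (f x') (f x) + dist (f x) (f x'') := dist_triangle _ _ _
          _ = dist (f x') (f x) + dist (f x'') (f x) := by rw [dist_comm (f x)]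
          _ ≤ 2 * (δ/3) := by linarith
      have hle : sSup _ ≤ 2 * (δ/3) := Real.sSup_le key (by positivity)
      have hge : (0:ℝ) ≤ sSup _ := Real.sSup_nonneg (fun d hd => (hbd x ε d hd).1)
      rw [Real.dist_eq, sub_zero, abs_of_nonneg hge]
      linarith
  · rintro ⟨hdense, hosc⟩
    have hK : IsCompact (closure G) := hGbd.isCompact_closure
    have hKsub : ∀ p ∈ closure G, p.1 ∈ Set.Icc a b := by
      intro p hp
      have hcl : closure G ⊆ Set.Icc a b ×ˢ (Set.univ : Set ℂ) :=
        closure_minimal (fun q hq => ⟨hGsub q hq, trivial⟩)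
          (isClosed_Icc.prod isClosed_univ)
      exact (hcl hp).1
    -- extraction from the oscillation hypothesis
    have hosc' : ∀ x ∈ Set.Icc a b, ∀ δ > (0:ℝ), ∃ ε > (0:ℝ), ∀ y' y'' : ℂ,
        (∃ x' ∈ Set.Icc a b, |x - x'| < ε ∧ (x', y') ∈ G) →
        (∃ x'' ∈ Set.Icc a b, |x - x''| < ε ∧ (x'', y'') ∈ G) →
        ‖y' - y''‖ ≤ δ := by
      intro x hx δ hδ
      have h1 := (Metric.tendsto_nhds.1 (hosc x hx) δ hδ).and self_mem_nhdsWithin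
      obtain ⟨ε, hdist, hεpos⟩ := h1.exists
      refine ⟨ε, hεpos, ?_⟩
      intro y' y'' h' h''
      have hmem : ‖y' - y''‖ ∈ {d : ℝ | ∃ y' y'' : ℂ,
          (∃ x' ∈ Set.Icc a b, |x - x'| < ε ∧ (x', y') ∈ G) ∧
          (∃ x'' ∈ Set.Icc a b, |x - x''| < ε ∧ (x'', y'') ∈ G) ∧
          d = ‖y' - y''‖} := ⟨y', y'', h', h'', rfl⟩
      have hbdd : BddAbove {d : ℝ | ∃ y' y'' : ℂ,
          (∃ x' ∈ Set.Icc a b, |x - x'| < ε ∧ (x', y') ∈ G) ∧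
          (∃ x'' ∈ Set.Icc a b, |x - x''| < ε ∧ (x'', y'') ∈ G) ∧
          d = ‖y' - y''‖} := ⟨2 * C, fun d hd => (hbd x ε d hd).2⟩
      have hle := le_csSup hbdd hmem
      rw [Real.dist_eq, sub_zero] at hdist
      exact le_of_lt (lt_of_le_of_lt (le_trans hle (le_abs_self _)) hdist)
    -- fibers of closure G over Icc a b are nonempty
    have hne : ∀ x ∈ Set.Icc a b, ∃ y, (x, y) ∈ closure G := by
      intro x hx
      have h1 : IsClosed (Prod.fst '' closure G) :=
        (hK.image continuous_fst).isClosed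
      have h2 : closure (Prod.fst '' G) ⊆ Prod.fst '' closure G :=
        closure_minimal (Set.image_mono subset_closure) h1
      obtain ⟨p, hp, hpx⟩ := h2 (hdense hx)
      exact ⟨p.2, by rwa [show (x, p.2) = p from Prod.ext hpx.symm rfl]⟩
    -- fibers are singletons
    have huniq : ∀ x ∈ Set.Icc a b, ∀ y₁ y₂ : ℂ,
        (x, y₁) ∈ closure G → (x, y₂) ∈ closure G → y₁ = y₂ := by
      intro x hx y₁ y₂ h₁ h₂
      apply eq_of_forall_dist_le
      intro δ hδ
      obtain ⟨ε, hεpos, hpair⟩ := hosc' x hx (δ/3) (by positivity)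
      set η := min ε (δ/3) with hη
      have hηpos : 0 < η := lt_min hεpos (by positivity)
      obtain ⟨u₁, v₁, hG₁, hu₁, hv₁⟩ := happrox x y₁ h₁ η hηpos
      obtain ⟨u₂, v₂, hG₂, hu₂, hv₂⟩ := happrox x y₂ h₂ η hηpos
      have hmid : ‖v₁ - v₂‖ ≤ δ/3 := by
        apply hpair
        · exact ⟨u₁, hGsub _ hG₁, lt_of_lt_of_le hu₁ (min_le_left _ _), hG₁⟩
        · exact ⟨u₂, hGsub _ hG₂, lt_of_lt_of_le hu₂ (min_le_left _ _), hG₂⟩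
      have hv₁' : dist y₁ v₁ < δ/3 := by
        rw [Complex.dist_eq]; exact lt_of_lt_of_le hv₁ (min_le_right _ _)
      have hv₂' : dist y₂ v₂ < δ/3 := by
        rw [Complex.dist_eq]; exact lt_of_lt_of_le hv₂ (min_le_right _ _)
      calc dist y₁ y₂ ≤ dist y₁ v₁ + dist v₁ v₂ + dist v₂ y₂ := dist_triangle4 _ _ _ _
        _ ≤ δ/3 + δ/3 + δ/3 := by
            refine add_le_add (add_le_add (le_of_lt hv₁') ?_) ?_
            · rw [Complex.dist_eq]; exact hmid
            · rw [dist_comm]; exact le_of_lt hv₂'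
        _ = δ := by ring
    -- define the function
    have hfexists : ∀ x : ℝ, ∃ y : ℂ, x ∈ Set.Icc a b → (x, y) ∈ closure G := by
      intro x
      by_cases hx : x ∈ Set.Icc a b
      · obtain ⟨y, hy⟩ := hne x hx; exact ⟨y, fun _ => hy⟩
      · exact ⟨0, fun h => absurd h hx⟩
    choose f hf using hfexists
    refine ⟨f, ?_, ?_⟩
    · -- continuity
      intro x hx
      rw [Metric.continuousWithinAt_iff]
      intro δ hδ
      obtain ⟨ε, hεpos, hpair⟩ := hosc' x hx (δ/4) (by positivity)
      refine ⟨ε/2, by positivity, ?_⟩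
      intro x' hx' hdx
      set η := min (ε/2) (δ/4) with hη
      have hηpos : 0 < η := lt_min (by positivity) (by positivity)
      obtain ⟨u₁, v₁, hG₁, hu₁, hv₁⟩ := happrox x (f x) (hf x hx) η hηpos
      obtain ⟨u₂, v₂, hG₂, hu₂, hv₂⟩ := happrox x' (f x') (hf x' hx') η hηpos
      have hmid : ‖v₁ - v₂‖ ≤ δ/4 := by
        apply hpair
        · refine ⟨u₁, hGsub _ hG₁, ?_, hG₁⟩
          exact lt_of_lt_of_le hu₁ (le_trans (min_le_left _ _) (by linarith))
        · refine ⟨u₂, hGsub _ hG₂, ?_, hG₂⟩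
          have h1 : |x - u₂| ≤ |x - x'| + |x' - u₂| := by
            have := abs_sub_le x x' u₂
            linarith
          have h2 : |x - x'| < ε/2 := by rw [Real.dist_eq] at hdx; rwa [abs_sub_comm]
          have h3 : |x' - u₂| < ε/2 := lt_of_lt_of_le hu₂ (min_le_left _ _)
          linarith
      calc dist (f x') (f x) ≤ dist (f x') v₂ + dist v₂ v₁ + dist v₁ (f x) :=
            dist_triangle4 _ _ _ _
        _ < δ/4 + δ/4 + δ/4 := by
            have e1 : dist (f x') v₂ < δ/4 := by
              rw [Complex.dist_eq]; exact lt_of_lt_of_le hv₂ (min_le_right _ _)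
            have e3 : dist v₁ (f x) < δ/4 := by
              rw [dist_comm, Complex.dist_eq]
              exact lt_of_lt_of_le hv₁ (min_le_right _ _)
            have e2 : dist v₂ v₁ ≤ δ/4 := by
              rw [dist_comm, Complex.dist_eq]; exact hmid
            have : dist v₂ v₁ < δ/4 + (δ/4 - dist v₁ (f x)) + (δ/4 - dist (f x') v₂) := by
              nlinarith [dist_nonneg (x := v₂) (y := v₁)]
            linarith
        _ < δ := by linarith
    · -- graph equality
      apply Set.Subset.antisymm
      · rintro ⟨x, y⟩ hp
        have hxI : x ∈ Set.Icc a b := hKsub _ hp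
        have : y = f x := huniq x hxI y (f x) hp (hf x hxI)
        exact ⟨x, hxI, by rw [this]⟩
      · rintro p ⟨x, hxI, rfl⟩
        exact hf x hxI
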